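/- Let Γ be an admissible Galois structure on a finitely complete category C. Let R and S be internal categories in C whose source and target morphisms d and c are trivial coverings, let f, g : R → S be internal functors, and let μ : R₀ → S₁ be an internal natural transformation from f to g. Then I(R) and I(S) are internal categories in X, I(f) and I(g) are internal functors I(R) → I(S), and I(μ) : I(R₀) → I(S₁) is an internal natural transformation from I(f) to I(g); in particular, if f and g are naturally isomorphic then so are I(f) and I(g). -/

import Mathlib

open CategoryTheory CategoryTheory.Limits

universe v₁ v₂ u₁ u₂

namespace GaloisPaper

/-- A Galois structure `Γ = (C, X, H, I, η, ε, E, F)`. -/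
structure GaloisStructure (C : Type u₁) [Category.{v₁} C] (X : Type u₂) [Category.{v₂} X] where
  I : C ⥤ X
  H : X ⥤ C
  adj : I ⊣ H
  fib : MorphismProperty C
  fibX : MorphismProperty X
  fib_of_iso : ∀ {A B : C} (f : A ⟶ B), IsIso f → fib f
  fibX_of_iso : ∀ {A B : X} (f : A ⟶ B), IsIso f → fibX f
  fib_pullback : ∀ {A B Z : C} (f : A ⟶ B) (g : Z ⟶ B), fib f →
    ∃ (P : C) (p₁ : P ⟶ A) (p₂ : P ⟶ Z), IsPullback p₁ p₂ f g ∧ fib p₂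
  fibX_pullback : ∀ {A B Z : X} (f : A ⟶ B) (g : Z ⟶ B), fibX f →
    ∃ (P : X) (p₁ : P ⟶ A) (p₂ : P ⟶ Z), IsPullback p₁ p₂ f g ∧ fibX p₂
  fib_comp : ∀ {A B Z : C} (f : A ⟶ B) (g : B ⟶ Z), fib f → fib g → fib (f ≫ g)
  fibX_comp : ∀ {A B Z : X} (f : A ⟶ B) (g : B ⟶ Z), fibX f → fibX g → fibX (f ≫ g)
  H_fib : ∀ {A B : X} (f : A ⟶ B), fibX f → fib (H.map f)
  I_fib : ∀ {A B : C} (f : A ⟶ B), fib f → fibX (I.map f)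

namespace GaloisStructure

variable {C : Type u₁} [Category.{v₁} C] {X : Type u₂} [Category.{v₂} X]
variable (Γ : GaloisStructure C X)

/-- A trivial covering: a fibration whose `η`-naturality square is a pullback. -/
def TrivialCovering {A B : C} (f : A ⟶ B) : Prop :=
  Γ.fib f ∧ IsPullback (Γ.adj.unit.app A) f ((Γ.I ⋙ Γ.H).map f) (Γ.adj.unit.app B)

/-- The full subcategory `(E ↓ B)` of the slice category over `B` given by fibrations. -/
abbrev SliceFib (B : C) := ObjectProperty.FullSubcategory (fun f : Over B => Γ.fib f.hom)

/-- The full subcategory `(F ↓ Y)` of the slice category over `Y : X` given by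
morphisms of the class `F`. -/
abbrev SliceFibX (Y : X) := ObjectProperty.FullSubcategory (fun f : Over Y => Γ.fibX f.hom)

/-- Composition with a fibration `p : E ⟶ B`, as a functor `(E ↓ E) ⥤ (E ↓ B)`;
the pullback functor `p*` is its right adjoint. -/
def compAlong {E B : C} (p : E ⟶ B) (hp : Γ.fib p) : Γ.SliceFib E ⥤ Γ.SliceFib B :=
  ObjectProperty.lift _ (ObjectProperty.ι _ ⋙ Over.map p)
    (fun f => Γ.fib_comp _ _ f.property hp)

/-- A monadic extension: a fibration `p` whose pullback functor
`p* : (E ↓ B) ⥤ (E ↓ E)` (i.e. the right adjoint of composition with `p`) is monadic. -/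
def MonadicExtension {E B : C} (p : E ⟶ B) : Prop :=
  ∃ hp : Γ.fib p, ∃ pstar : Γ.SliceFib B ⥤ Γ.SliceFib E,
    Nonempty (Γ.compAlong p hp ⊣ pstar) ∧ Nonempty (MonadicRightAdjoint pstar)

/-- A covering (central extension): a fibration whose pullback along some monadic
extension is a trivial covering. -/
def Covering {A B : C} (f : A ⟶ B) : Prop :=
  Γ.fib f ∧ ∃ (E : C) (p : E ⟶ B), Γ.MonadicExtension p ∧
    ∃ (P : C) (q : P ⟶ A) (r : P ⟶ E), IsPullback q r f p ∧ Γ.TrivialCovering r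

/-- A normal extension: a monadic extension whose kernel pair projections are
trivial coverings. -/
def NormalExtension {E B : C} (p : E ⟶ B) : Prop :=
  Γ.MonadicExtension p ∧ ∃ (R : C) (d c : R ⟶ E), IsPullback d c p p ∧
    Γ.TrivialCovering d ∧ Γ.TrivialCovering c

/-- The restriction `I^B : (E ↓ B) ⥤ (F ↓ I B)` of the reflection `I`. -/
def restrictI (B : C) : Γ.SliceFib B ⥤ Γ.SliceFibX (Γ.I.obj B) :=
  ObjectProperty.lift _ (ObjectProperty.ι _ ⋙ Over.post Γ.I)
    (fun f => Γ.I_fib _ f.property)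

/-- Admissibility of a Galois structure: each `H^B`, i.e. each right adjoint of
`I^B : (E ↓ B) ⥤ (F ↓ I B)`, is full and faithful. -/
def Admissible : Prop :=
  ∀ B : C, ∃ (HB : Γ.SliceFibX (Γ.I.obj B) ⥤ Γ.SliceFib B) (_ : Γ.restrictI B ⊣ HB),
    HB.Full ∧ HB.Faithful

/-- Pullback-stability of monadic extensions: the pullback of a monadic extension
along any morphism exists and is again a monadic extension. -/
def MonStable : Prop :=
  ∀ {E B Z : C} (p : E ⟶ B) (g : Z ⟶ B), Γ.MonadicExtension p →
    ∃ (P : C) (q : P ⟶ E) (r : P ⟶ Z), IsPullback q r p g ∧ Γ.MonadicExtension r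

/-- A weakly universal normal extension of `B`. -/
def WeaklyUniversal {U B : C} (u : U ⟶ B) : Prop :=
  Γ.NormalExtension u ∧ ∀ {E : C} (p : E ⟶ B), Γ.NormalExtension p → ∃ e : U ⟶ E, e ≫ p = u

/-- The category `NExt_Γ(C)` of normal extensions, a full subcategory of the arrow
category of `C`. -/
abbrev NExtCat := ObjectProperty.FullSubcategory (fun f : Arrow C => Γ.NormalExtension f.hom)

/-- The category `Ext_Γ(C)` of monadic extensions, a full subcategory of the arrow
category of `C`. -/
abbrev ExtCat := ObjectProperty.FullSubcategory (fun f : Arrow C => Γ.MonadicExtension f.hom)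

/-- The codomain functor `NExt_Γ(C) ⥤ C`. -/
def codF : Γ.NExtCat ⥤ C := ObjectProperty.ι _ ⋙ Arrow.rightFunc

/-- The codomain functor `Ext_Γ(C) ⥤ C`. -/
def codExt : Γ.ExtCat ⥤ C := ObjectProperty.ι _ ⋙ Arrow.rightFunc

/-- The inclusion `NExt_Γ(C) ⥤ Ext_Γ(C)`: every normal extension is monadic. -/
def inclNExt : Γ.NExtCat ⥤ Γ.ExtCat :=
  ObjectProperty.lift _ (ObjectProperty.ι _) (fun p => p.property.1)

end GaloisStructure


variable {C : Type u₁} [Category.{v₁} C]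

/-- An internal category in a category `C`, with a chosen pullback of composable pairs
(and of composable triples, used to state associativity). -/
structure InternalCat (C : Type u₁) [Category.{v₁} C] where
  base : C
  arr : C
  d : arr ⟶ base
  c : arr ⟶ base
  e : base ⟶ arr
  pairs : C
  p₁ : pairs ⟶ arr
  p₂ : pairs ⟶ arr
  isPullback : IsPullback p₁ p₂ c d
  m : pairs ⟶ arr
  d_e : e ≫ d = 𝟙 base
  c_e : e ≫ c = 𝟙 base
  m_d : m ≫ d = p₁ ≫ d
  m_c : m ≫ c = p₂ ≫ c
  unit_right : isPullback.lift (𝟙 arr) (c ≫ e)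
    (by rw [Category.id_comp, Category.assoc, d_e, Category.comp_id]) ≫ m = 𝟙 arr
  unit_left : isPullback.lift (d ≫ e) (𝟙 arr)
    (by rw [Category.id_comp, Category.assoc, c_e, Category.comp_id]) ≫ m = 𝟙 arr
  triples : C
  t₁ : triples ⟶ pairs
  t₂ : triples ⟶ arr
  isPullback₃ : IsPullback t₁ t₂ (p₂ ≫ c) d
  assoc : isPullback.lift (t₁ ≫ m) t₂
        (by rw [Category.assoc, m_c]; exact isPullback₃.w) ≫ m =
      isPullback.lift (t₁ ≫ p₁)
        (isPullback.lift (t₁ ≫ p₂) t₂ (by rw [Category.assoc]; exact isPullback₃.w) ≫ m)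
        (by
          rw [Category.assoc, isPullback.w, Category.assoc, m_d, ← Category.assoc,
            ← Category.assoc, IsPullback.lift_fst]) ≫ m

/-- An internal functor between internal categories in `C`. -/
structure InternalFunctor (R S : InternalCat C) where
  f₀ : R.base ⟶ S.base
  f₁ : R.arr ⟶ S.arr
  w_d : f₁ ≫ S.d = R.d ≫ f₀
  w_c : f₁ ≫ S.c = R.c ≫ f₀
  w_e : R.e ≫ f₁ = f₀ ≫ S.e
  w_m : R.m ≫ f₁ =
    S.isPullback.lift (R.p₁ ≫ f₁) (R.p₂ ≫ f₁)
      (by rw [Category.assoc, Category.assoc, w_c, w_d, ← Category.assoc, ← Category.assoc,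
        R.isPullback.w]) ≫ S.m

/-- An internal natural transformation between internal functors. -/
structure InternalNatTrans {R S : InternalCat C} (F G : InternalFunctor R S) where
  μ : R.base ⟶ S.arr
  w_d : μ ≫ S.d = F.f₀
  w_c : μ ≫ S.c = G.f₀
  natural :
    S.isPullback.lift F.f₁ (R.c ≫ μ)
        (by rw [F.w_c, Category.assoc, w_d]) ≫ S.m =
      S.isPullback.lift (R.d ≫ μ) G.f₁
        (by rw [Category.assoc, w_c, G.w_d]) ≫ S.m

/-- An internal natural transformation `μ : F ⟶ G` is an internal natural isomorphism
when there is an internal natural transformation `ν : G ⟶ F` such that both composites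
(computed with the internal composition of `S`) are the identity transformations
`e ∘ f₀` and `e ∘ g₀`. -/
def InternalNatTrans.IsNatIso {R S : InternalCat C} {F G : InternalFunctor R S}
    (μ : InternalNatTrans F G) : Prop :=
  ∃ ν : InternalNatTrans G F,
    S.isPullback.lift μ.μ ν.μ (by rw [μ.w_c, ν.w_d]) ≫ S.m = F.f₀ ≫ S.e ∧
    S.isPullback.lift ν.μ μ.μ (by rw [ν.w_c, μ.w_d]) ≫ S.m = G.f₀ ≫ S.e


namespace GaloisStructure

variable {X : Type u₂} [Category.{v₂} X] (Γ : GaloisStructure C X)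

@[simp] lemma fs_id_left {D : Type*} [Category D] {T : D} {P : Over T → Prop}
    (y : ObjectProperty.FullSubcategory P) : CommaMorphism.left (𝟙 y : y ⟶ y).hom = 𝟙 y.obj.left := rfl

@[simp] lemma fs_comp_left {D : Type*} [Category D] {T : D} {P : Over T → Prop}
    {x y z : ObjectProperty.FullSubcategory P} (t : x ⟶ y) (t' : y ⟶ z) :
    CommaMorphism.left (t ≫ t').hom = t.hom.left ≫ t'.hom.left := rfl

lemma fib_of_isPullback {A B Z P : C} {f : A ⟶ B} {g : Z ⟶ B} {p₁ : P ⟶ A} {p₂ : P ⟶ Z}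
    (h : IsPullback p₁ p₂ f g) (hf : Γ.fib f) : Γ.fib p₂ := by
  obtain ⟨P', q₁, q₂, h', hq⟩ := Γ.fib_pullback f g hf
  rw [← h.isoIsPullback_hom_snd _ _ h']
  exact Γ.fib_comp _ _ (Γ.fib_of_iso _ inferInstance) hq

variable [HasFiniteLimits C]

/-- The concrete right adjoint `H^B`. -/
@[simps] noncomputable def Hc (B : C) : Γ.SliceFibX (Γ.I.obj B) ⥤ Γ.SliceFib B where
  obj y := ⟨Over.mk (pullback.snd (Γ.H.map y.obj.hom) (Γ.adj.unit.app B)),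
    Γ.fib_of_isPullback (IsPullback.of_hasPullback _ _) (Γ.H_fib _ y.property)⟩
  map {y y'} t := ObjectProperty.homMk (Over.homMk
    (pullback.lift (pullback.fst _ _ ≫ Γ.H.map t.hom.left) (pullback.snd _ _)
      (by rw [Category.assoc, ← Γ.H.map_comp, Over.w t.hom, pullback.condition]))
    (by exact pullback.lift_snd _ _ _))
  map_id y := by
    apply ObjectProperty.hom_ext
    apply Over.OverMorphism.ext
    apply pullback.hom_ext <;> simp
  map_comp t t' := by
    apply ObjectProperty.hom_ext
    apply Over.OverMorphism.ext
    apply pullback.hom_ext <;> simp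
    · erw [pullback.lift_fst, pullback.lift_fst, pullback.lift_fst_assoc]
      exact (Category.assoc _ _ _).symm
    · erw [pullback.lift_snd, pullback.lift_snd, pullback.lift_snd]

@[simp] lemma restrictI_map_left {B : C} {x x' : Γ.SliceFib B} (u : x ⟶ x') :
    CommaMorphism.left ((Γ.restrictI B).map u).hom = Γ.I.map u.hom.left := rfl

lemma counit_comp_eq {W : X} {B : C} (w : W ⟶ Γ.I.obj B) {A : C} (u : A ⟶ Γ.H.obj W)
    (v : A ⟶ B) (huv : u ≫ Γ.H.map w = v ≫ Γ.adj.unit.app B) :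
    Γ.I.map u ≫ Γ.adj.counit.app W ≫ w = Γ.I.map v := by
  rw [← Γ.adj.counit_naturality w, ← Category.assoc, ← Γ.I.map_comp, huv, Γ.I.map_comp,
    Category.assoc, Γ.adj.left_triangle_components, Category.comp_id]

/-- The concrete adjunction `I^B ⊣ H^B`. -/
noncomputable def admAdj (B : C) : Γ.restrictI B ⊣ Γ.Hc B :=
  Adjunction.mkOfHomEquiv
  { homEquiv := fun x y =>
    { toFun := fun k => ObjectProperty.homMk (Over.homMk
        (pullback.lift (Γ.adj.unit.app x.obj.left ≫ Γ.H.map k.hom.left) x.obj.hom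
          (by
            erw [Category.assoc, ← Γ.H.map_comp, Over.w k.hom]
            exact Γ.adj.unit_naturality x.obj.hom))
        (by exact pullback.lift_snd _ _ _))
      invFun := fun t => ObjectProperty.homMk (Over.homMk
        (Γ.I.map (t.hom.left ≫ pullback.fst _ _) ≫ Γ.adj.counit.app y.obj.left)
        (by
          have hw : t.hom.left ≫ pullback.snd (Γ.H.map y.obj.hom) (Γ.adj.unit.app B) =
              x.obj.hom := Over.w t.hom
          erw [Category.assoc]
          exact Γ.counit_comp_eq y.obj.hom
            (t.hom.left ≫ pullback.fst (Γ.H.map y.obj.hom) (Γ.adj.unit.app B)) x.obj.hom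
            (by erw [Category.assoc, pullback.condition, ← Category.assoc, hw])))
      left_inv := fun k => by
        apply ObjectProperty.hom_ext
        apply Over.OverMorphism.ext
        change Γ.I.map (pullback.lift (f := Γ.H.map y.obj.hom) (g := Γ.adj.unit.app B)
          (Γ.adj.unit.app x.obj.left ≫ Γ.H.map k.hom.left) x.obj.hom _ ≫
          pullback.fst (Γ.H.map y.obj.hom) (Γ.adj.unit.app B)) ≫ Γ.adj.counit.app y.obj.left =
          k.hom.left
        have htr : Γ.I.map (Γ.adj.unit.app x.obj.left) ≫
            Γ.adj.counit.app ((Γ.restrictI B).obj x).obj.left = 𝟙 (Γ.I.obj x.obj.left) :=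
          Γ.adj.left_triangle_components x.obj.left
        erw [pullback.lift_fst, Γ.I.map_comp, Category.assoc,
          Γ.adj.counit_naturality k.hom.left, ← Category.assoc, htr]
        exact Category.id_comp _
      right_inv := fun t => by
        apply ObjectProperty.hom_ext
        apply Over.OverMorphism.ext
        dsimp only [ObjectProperty.homMk_hom, Over.homMk_left]
        apply pullback.hom_ext
        · have hnat : Γ.adj.unit.app x.obj.left ≫
              Γ.H.map (Γ.I.map (t.hom.left ≫ pullback.fst (Γ.H.map y.obj.hom) (Γ.adj.unit.app B))) =
              (t.hom.left ≫ pullback.fst _ _) ≫ Γ.adj.unit.app (Γ.H.obj y.obj.left) :=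
            Γ.adj.unit_naturality _
          have htr2 : Γ.adj.unit.app (Γ.H.obj y.obj.left) ≫
              Γ.H.map (Γ.adj.counit.app y.obj.left) = 𝟙 (Γ.H.obj y.obj.left) :=
            Γ.adj.right_triangle_components _
          erw [pullback.lift_fst, Γ.H.map_comp, ← Category.assoc, hnat,
            Category.assoc, htr2]
          exact Category.comp_id _
        · erw [pullback.lift_snd]
          exact (Over.w t.hom).symm }
    homEquiv_naturality_left_symm := fun u k => by
      apply ObjectProperty.hom_ext
      apply Over.OverMorphism.ext
      simp [Γ.I.map_comp]
      erw [Category.assoc, Γ.I.map_comp (Over.Hom.left u.hom), Category.assoc]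
      rfl
    homEquiv_naturality_right := fun k u => by
      apply ObjectProperty.hom_ext
      apply Over.OverMorphism.ext
      rename_i x y y'
      change pullback.lift (f := Γ.H.map y'.obj.hom) (g := Γ.adj.unit.app B)
          (Γ.adj.unit.app x.obj.left ≫ Γ.H.map (k ≫ u).hom.left) x.obj.hom _ =
        pullback.lift (f := Γ.H.map y.obj.hom) (g := Γ.adj.unit.app B)
          (Γ.adj.unit.app x.obj.left ≫ Γ.H.map k.hom.left) x.obj.hom _ ≫
        pullback.lift (f := Γ.H.map y'.obj.hom) (g := Γ.adj.unit.app B)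
          (pullback.fst (Γ.H.map y.obj.hom) (Γ.adj.unit.app B) ≫ Γ.H.map u.hom.left)
          (pullback.snd (Γ.H.map y.obj.hom) (Γ.adj.unit.app B)) _
      apply pullback.hom_ext
      · erw [pullback.lift_fst, Category.assoc, pullback.lift_fst, pullback.lift_fst_assoc,
          Γ.H.map_comp]
        exact (Category.assoc _ _ _).symm
      · erw [pullback.lift_snd, Category.assoc, pullback.lift_snd, pullback.lift_snd] }

lemma counit_iso (hadm : Γ.Admissible) {B : C} {W : X} (w : W ⟶ Γ.I.obj B)
    (hwF : Γ.fibX w) :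
    IsIso (Γ.I.map (pullback.fst (Γ.H.map w) (Γ.adj.unit.app B)) ≫ Γ.adj.counit.app W) := by
  obtain ⟨HB, adjAbs, hFull, hFaith⟩ := hadm B
  haveI := hFull; haveI := hFaith
  haveI : (Γ.Hc B).Full :=
    Functor.Full.of_iso (Adjunction.rightAdjointUniq adjAbs (Γ.admAdj B))
  haveI : (Γ.Hc B).Faithful :=
    Functor.Faithful.of_iso (Adjunction.rightAdjointUniq adjAbs (Γ.admAdj B))
  set y : Γ.SliceFibX (Γ.I.obj B) := ⟨Over.mk w, hwF⟩ with hy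
  haveI h1 : IsIso ((Γ.admAdj B).counit.app y) := inferInstance
  have h2 : IsIso ((ObjectProperty.ι (fun f : Over (Γ.I.obj B) => Γ.fibX f.hom) ⋙ Over.forget _).map
      ((Γ.admAdj B).counit.app y)) := inferInstance
  have h3 : (ObjectProperty.ι (fun f : Over (Γ.I.obj B) => Γ.fibX f.hom) ⋙ Over.forget _).map ((Γ.admAdj B).counit.app y)
      = Γ.I.map (pullback.fst (Γ.H.map w) (Γ.adj.unit.app B)) ≫ Γ.adj.counit.app W := by
    simp only [admAdj]
    simp
    exact congrArg (fun z : pullback (Γ.H.map w) (Γ.adj.unit.app B) ⟶ Γ.H.obj W =>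
      Γ.I.map z ≫ Γ.adj.counit.app W) (Category.id_comp _)
  rwa [h3] at h2

/-- Lemma (a): `I` preserves pullbacks of trivial coverings along trivial coverings. -/
lemma map_isPullback (hadm : Γ.Admissible) {P A Z B : C} {f : A ⟶ B} {g : Z ⟶ B}
    {q : P ⟶ A} {r : P ⟶ Z} (hf : Γ.TrivialCovering f) (hg : Γ.TrivialCovering g)
    (hpb : IsPullback q r f g) :
    IsPullback (Γ.I.map q) (Γ.I.map r) (Γ.I.map f) (Γ.I.map g) := by
  obtain ⟨Q, π₁, π₂, hQ, hπ₂⟩ := Γ.fibX_pullback (Γ.I.map f) (Γ.I.map g) (Γ.I_fib f hf.1)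
  have hfU : IsPullback (Γ.adj.unit.app A) f (Γ.H.map (Γ.I.map f)) (Γ.adj.unit.app B) := hf.2
  have hgU : IsPullback (Γ.adj.unit.app Z) g (Γ.H.map (Γ.I.map g)) (Γ.adj.unit.app B) := hg.2
  have hwF : Γ.fibX (π₂ ≫ Γ.I.map g) := Γ.fibX_comp _ _ hπ₂ (Γ.I_fib g hg.1)
  have hκ := Γ.counit_iso hadm (π₂ ≫ Γ.I.map g) hwF
  set w : Q ⟶ Γ.I.obj B := π₂ ≫ Γ.I.map g with hwdef
  set PW := pullback (Γ.H.map w) (Γ.adj.unit.app B) with hPW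
  set a : PW ⟶ Γ.H.obj Q := pullback.fst (Γ.H.map w) (Γ.adj.unit.app B) with ha
  set b : PW ⟶ B := pullback.snd (Γ.H.map w) (Γ.adj.unit.app B) with hb
  have hab : a ≫ Γ.H.map w = b ≫ Γ.adj.unit.app B := pullback.condition
  haveI : PreservesLimitsOfSize.{0, 0} Γ.H := Γ.adj.rightAdjoint_preservesLimits
  have hHQ : IsPullback (Γ.H.map π₁) (Γ.H.map π₂) (Γ.H.map (Γ.I.map f))
      (Γ.H.map (Γ.I.map g)) := Functor.map_isPullback Γ.H hQ
  -- the comparison maps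
  have hacond : (a ≫ Γ.H.map π₁) ≫ Γ.H.map (Γ.I.map f) = b ≫ Γ.adj.unit.app B := by
    rw [Category.assoc, ← Γ.H.map_comp, hQ.w, ← hwdef]
    exact hab
  have hbcond : (a ≫ Γ.H.map π₂) ≫ Γ.H.map (Γ.I.map g) = b ≫ Γ.adj.unit.app B := by
    rw [Category.assoc, ← Γ.H.map_comp, ← hwdef]
    exact hab
  set α : PW ⟶ A := hfU.lift (a ≫ Γ.H.map π₁) b hacond with hα
  have hα₁ : α ≫ Γ.adj.unit.app A = a ≫ Γ.H.map π₁ := hfU.lift_fst _ _ _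
  have hα₂ : α ≫ f = b := hfU.lift_snd _ _ _
  set β : PW ⟶ Z := hgU.lift (a ≫ Γ.H.map π₂) b hbcond with hβ
  have hβ₁ : β ≫ Γ.adj.unit.app Z = a ≫ Γ.H.map π₂ := hgU.lift_fst _ _ _
  have hβ₂ : β ≫ g = b := hgU.lift_snd _ _ _
  set ψ : PW ⟶ P := hpb.lift α β (by rw [hα₂, hβ₂]) with hψ
  have hψ₁ : ψ ≫ q = α := hpb.lift_fst _ _ _
  have hψ₂ : ψ ≫ r = β := hpb.lift_snd _ _ _
  set θ : Γ.I.obj P ⟶ Q :=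
    hQ.lift (Γ.I.map q) (Γ.I.map r) (by rw [← Γ.I.map_comp, ← Γ.I.map_comp, hpb.w]) with hθ
  have hθ₁ : θ ≫ π₁ = Γ.I.map q := hQ.lift_fst _ _ _
  have hθ₂ : θ ≫ π₂ = Γ.I.map r := hQ.lift_snd _ _ _
  have hφcond : (Γ.adj.unit.app P ≫ Γ.H.map θ) ≫ Γ.H.map w = (r ≫ g) ≫ Γ.adj.unit.app B := by
    rw [Category.assoc, ← Γ.H.map_comp, hwdef, ← Category.assoc θ, hθ₂,
      ← Γ.I.map_comp]
    erw [Γ.adj.unit_naturality]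
  set φ : P ⟶ PW := pullback.lift (Γ.adj.unit.app P ≫ Γ.H.map θ) (r ≫ g) hφcond with hφ
  have hφa : φ ≫ a = Γ.adj.unit.app P ≫ Γ.H.map θ := pullback.lift_fst _ _ _
  have hφb : φ ≫ b = r ≫ g := pullback.lift_snd _ _ _
  have hφα : φ ≫ α = q := by
    apply hfU.hom_ext
    · rw [Category.assoc, hα₁, ← Category.assoc, hφa, Category.assoc,
        ← Γ.H.map_comp, hθ₁, Γ.adj.unit_naturality]
    · rw [Category.assoc, hα₂, hφb, hpb.w]
  have hφβ : φ ≫ β = r := by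
    apply hgU.hom_ext
    · rw [Category.assoc, hβ₁, ← Category.assoc, hφa, Category.assoc,
        ← Γ.H.map_comp, hθ₂, Γ.adj.unit_naturality]
    · rw [Category.assoc, hβ₂, hφb]
  have hφψ : φ ≫ ψ = 𝟙 P := by
    apply hpb.hom_ext
    · rw [Category.assoc, hψ₁, hφα, Category.id_comp]
    · rw [Category.assoc, hψ₂, hφβ, Category.id_comp]
  have hψφ : ψ ≫ φ = 𝟙 PW := by
    apply pullback.hom_ext
    · rw [Category.assoc, Category.id_comp, ← ha, hφa, ← Category.assoc,
        ← Γ.adj.unit_naturality ψ, Category.assoc, ← Γ.H.map_comp]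
      apply hHQ.hom_ext
      · rw [Category.assoc, ← Γ.H.map_comp, Category.assoc, hθ₁, ← Γ.I.map_comp, hψ₁,
          Γ.adj.unit_naturality α, hα₁]
      · rw [Category.assoc, ← Γ.H.map_comp, Category.assoc, hθ₂, ← Γ.I.map_comp, hψ₂,
          Γ.adj.unit_naturality β, hβ₁]
    · rw [Category.assoc, Category.id_comp, ← hb, hφb, ← Category.assoc, hψ₂, hβ₂]
  haveI hiφ : IsIso φ := ⟨ψ, hφψ, hψφ⟩
  have hθeq : Γ.I.map φ ≫ (Γ.I.map a ≫ Γ.adj.counit.app Q) = θ := by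
    rw [← Category.assoc, ← Γ.I.map_comp, hφa, Γ.I.map_comp, Category.assoc,
      Γ.adj.counit_naturality θ, ← Category.assoc, Γ.adj.left_triangle_components]
    exact Category.id_comp _
  haveI : IsIso (Γ.I.map a ≫ Γ.adj.counit.app Q) := hκ
  haveI hiθ : IsIso θ := by rw [← hθeq]; infer_instance
  refine hQ.of_iso (asIso θ).symm (Iso.refl _) (Iso.refl _) (Iso.refl _) ?_ ?_ ?_ ?_
  · rw [Iso.refl_hom, Category.comp_id, Iso.symm_hom, asIso_inv, ← hθ₁, ← Category.assoc,
      IsIso.inv_hom_id, Category.id_comp]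
  · rw [Iso.refl_hom, Category.comp_id, Iso.symm_hom, asIso_inv, ← hθ₂, ← Category.assoc,
      IsIso.inv_hom_id, Category.id_comp]
  · rw [Iso.refl_hom, Iso.refl_hom, Category.comp_id, Category.id_comp]
  · rw [Iso.refl_hom, Iso.refl_hom, Category.comp_id, Category.id_comp]

/-- Trivial coverings are stable under pullback along trivial coverings. -/
lemma trivialCovering_of_isPullback (hadm : Γ.Admissible) {P A Z B : C}
    {f : A ⟶ B} {g : Z ⟶ B} {q : P ⟶ A} {r : P ⟶ Z}
    (hf : Γ.TrivialCovering f) (hg : Γ.TrivialCovering g) (hpb : IsPullback q r f g) :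
    Γ.TrivialCovering r := by
  refine ⟨Γ.fib_of_isPullback hpb hf.1, ?_⟩
  have hI := Γ.map_isPullback hadm hf hg hpb
  haveI : PreservesLimitsOfSize.{0, 0} Γ.H := Γ.adj.rightAdjoint_preservesLimits
  have hH : IsPullback (Γ.H.map (Γ.I.map q)) (Γ.H.map (Γ.I.map r)) (Γ.H.map (Γ.I.map f))
      (Γ.H.map (Γ.I.map g)) := Functor.map_isPullback Γ.H hI
  have hfU : IsPullback (Γ.adj.unit.app A) f (Γ.H.map (Γ.I.map f)) (Γ.adj.unit.app B) := hf.2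
  have big := hpb.paste_horiz hfU
  have e₁ : q ≫ Γ.adj.unit.app A = Γ.adj.unit.app P ≫ Γ.H.map (Γ.I.map q) :=
    (Γ.adj.unit_naturality q).symm
  have e₂ : g ≫ Γ.adj.unit.app B = Γ.adj.unit.app Z ≫ Γ.H.map (Γ.I.map g) :=
    (Γ.adj.unit_naturality g).symm
  rw [e₁, e₂] at big
  exact big.of_right (Γ.adj.unit_naturality r) hH

/-- Trivial coverings are closed under composition. -/
lemma trivialCovering_comp {A B Z : C} {f : A ⟶ B} {g : B ⟶ Z}
    (hf : Γ.TrivialCovering f) (hg : Γ.TrivialCovering g) : Γ.TrivialCovering (f ≫ g) := by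
  refine ⟨Γ.fib_comp _ _ hf.1 hg.1, ?_⟩
  have hfU : IsPullback (Γ.adj.unit.app A) f (Γ.H.map (Γ.I.map f)) (Γ.adj.unit.app B) := hf.2
  have hgU : IsPullback (Γ.adj.unit.app B) g (Γ.H.map (Γ.I.map g)) (Γ.adj.unit.app Z) := hg.2
  have := hfU.paste_vert hgU
  have he : Γ.H.map (Γ.I.map f) ≫ Γ.H.map (Γ.I.map g) = Γ.H.map (Γ.I.map (f ≫ g)) := by
    rw [Γ.I.map_comp, Γ.H.map_comp]
  rwa [he] at this

/-- `I` of a lift into a pullback is the lift into the image pullback. -/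
lemma lift_map {P A Z B : C} {f : A ⟶ B} {g : Z ⟶ B} {p₁ : P ⟶ A} {p₂ : P ⟶ Z}
    (h : IsPullback p₁ p₂ f g)
    (h' : IsPullback (Γ.I.map p₁) (Γ.I.map p₂) (Γ.I.map f) (Γ.I.map g))
    {W : C} {u : W ⟶ A} {v : W ⟶ Z} (hw : u ≫ f = v ≫ g)
    {u' : Γ.I.obj W ⟶ Γ.I.obj A} {v' : Γ.I.obj W ⟶ Γ.I.obj Z}
    (hu : u' = Γ.I.map u) (hv : v' = Γ.I.map v)
    (pf : u' ≫ Γ.I.map f = v' ≫ Γ.I.map g) :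
    h'.lift u' v' pf = Γ.I.map (h.lift u v hw) := by
  apply h'.hom_ext
  · rw [h'.lift_fst, ← Γ.I.map_comp, h.lift_fst, hu]
  · rw [h'.lift_snd, ← Γ.I.map_comp, h.lift_snd, hv]

end GaloisStructure

namespace GaloisStructure

section MapDefs

variable {X : Type u₂} [Category.{v₂} X] [HasFiniteLimits C]
variable (Γ : GaloisStructure C X)

/-- The image of an internal category under `I`, when `d` and `c` are trivial coverings. -/
@[simps] noncomputable def mapCat (hadm : Γ.Admissible) (R : InternalCat C)
    (hd : Γ.TrivialCovering R.d) (hc : Γ.TrivialCovering R.c) : InternalCat X where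
  base := Γ.I.obj R.base
  arr := Γ.I.obj R.arr
  d := Γ.I.map R.d
  c := Γ.I.map R.c
  e := Γ.I.map R.e
  pairs := Γ.I.obj R.pairs
  p₁ := Γ.I.map R.p₁
  p₂ := Γ.I.map R.p₂
  isPullback := Γ.map_isPullback hadm hc hd R.isPullback
  m := Γ.I.map R.m
  d_e := by rw [← Γ.I.map_comp, R.d_e, Γ.I.map_id]
  c_e := by rw [← Γ.I.map_comp, R.c_e, Γ.I.map_id]
  m_d := by rw [← Γ.I.map_comp, ← Γ.I.map_comp, R.m_d]
  m_c := by rw [← Γ.I.map_comp, ← Γ.I.map_comp, R.m_c]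
  unit_right := by
    rw [Γ.lift_map R.isPullback (Γ.map_isPullback hadm hc hd R.isPullback)
      (by rw [Category.id_comp, Category.assoc, R.d_e, Category.comp_id])
      (Γ.I.map_id R.arr).symm (Γ.I.map_comp R.c R.e).symm _,
      ← Γ.I.map_comp, R.unit_right, Γ.I.map_id]
  unit_left := by
    rw [Γ.lift_map R.isPullback (Γ.map_isPullback hadm hc hd R.isPullback)
      (by rw [Category.id_comp, Category.assoc, R.c_e, Category.comp_id])
      (Γ.I.map_comp R.d R.e).symm (Γ.I.map_id R.arr).symm _,
      ← Γ.I.map_comp, R.unit_left, Γ.I.map_id]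
  triples := Γ.I.obj R.triples
  t₁ := Γ.I.map R.t₁
  t₂ := Γ.I.map R.t₂
  isPullback₃ := by
    have := Γ.map_isPullback hadm
      (Γ.trivialCovering_comp (Γ.trivialCovering_of_isPullback hadm hc hd R.isPullback) hc)
      hd R.isPullback₃
    rwa [Γ.I.map_comp] at this
  assoc := by
    have hRpb := Γ.map_isPullback hadm hc hd R.isPullback
    have hw₂ : (R.t₁ ≫ R.p₂) ≫ R.c = R.t₂ ≫ R.d := by
      rw [Category.assoc]; exact R.isPullback₃.w
    have hv' : hRpb.lift (Γ.I.map R.t₁ ≫ Γ.I.map R.p₂) (Γ.I.map R.t₂)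
        (by rw [← Γ.I.map_comp, ← Γ.I.map_comp, ← Γ.I.map_comp, hw₂]) ≫ Γ.I.map R.m =
        Γ.I.map (R.isPullback.lift (R.t₁ ≫ R.p₂) R.t₂ hw₂ ≫ R.m) := by
      rw [Γ.lift_map R.isPullback hRpb hw₂ (Γ.I.map_comp R.t₁ R.p₂).symm rfl _,
        ← Γ.I.map_comp]
    rw [Γ.lift_map R.isPullback hRpb
        (by rw [Category.assoc, R.isPullback.w, Category.assoc, R.m_d, ← Category.assoc,
          ← Category.assoc, IsPullback.lift_fst])
        (Γ.I.map_comp R.t₁ R.p₁).symm hv' _,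
      Γ.lift_map R.isPullback hRpb
        (by rw [Category.assoc, R.m_c]; exact R.isPullback₃.w)
        (Γ.I.map_comp R.t₁ R.m).symm rfl _,
      ← Γ.I.map_comp, ← Γ.I.map_comp, R.assoc]

variable (hadm : Γ.Admissible) {R S : InternalCat C}
  (hRd : Γ.TrivialCovering R.d) (hRc : Γ.TrivialCovering R.c)
  (hSd : Γ.TrivialCovering S.d) (hSc : Γ.TrivialCovering S.c)

/-- The image of an internal functor under `I`. -/
@[simps] noncomputable def mapFunctor (F : InternalFunctor R S) :
    InternalFunctor (Γ.mapCat hadm R hRd hRc) (Γ.mapCat hadm S hSd hSc) where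
  f₀ := Γ.I.map F.f₀
  f₁ := Γ.I.map F.f₁
  w_d := by
    simp only [mapCat_d]
    erw [← Γ.I.map_comp, ← Γ.I.map_comp, F.w_d]
  w_c := by
    simp only [mapCat_c]
    erw [← Γ.I.map_comp, ← Γ.I.map_comp, F.w_c]
  w_e := by
    simp only [mapCat_e]
    erw [← Γ.I.map_comp, ← Γ.I.map_comp, F.w_e]
  w_m := by
    simp only [mapCat_m, mapCat_p₁, mapCat_p₂]
    erw [Γ.lift_map S.isPullback (Γ.mapCat hadm S hSd hSc).isPullback
      (by rw [Category.assoc, Category.assoc, F.w_c, F.w_d, ← Category.assoc,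
        ← Category.assoc, R.isPullback.w])
      (Γ.I.map_comp R.p₁ F.f₁).symm (Γ.I.map_comp R.p₂ F.f₁).symm _,
      ← Γ.I.map_comp, ← Γ.I.map_comp, F.w_m]

/-- The image of an internal natural transformation under `I`. -/
@[simps] noncomputable def mapNat {F G : InternalFunctor R S} (μ : InternalNatTrans F G) :
    InternalNatTrans (Γ.mapFunctor hadm hRd hRc hSd hSc F)
      (Γ.mapFunctor hadm hRd hRc hSd hSc G) where
  μ := Γ.I.map μ.μ
  w_d := by
    simp only [mapCat_d, mapFunctor_f₀]
    erw [← Γ.I.map_comp, μ.w_d]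
  w_c := by
    simp only [mapCat_c, mapFunctor_f₀]
    erw [← Γ.I.map_comp, μ.w_c]
  natural := by
    simp only [mapCat_m, mapCat_c, mapCat_d, mapFunctor_f₁]
    erw [Γ.lift_map S.isPullback (Γ.mapCat hadm S hSd hSc).isPullback
      (by rw [F.w_c, Category.assoc, μ.w_d]) rfl (Γ.I.map_comp R.c μ.μ).symm _,
      Γ.lift_map S.isPullback (Γ.mapCat hadm S hSd hSc).isPullback
      (by rw [Category.assoc, μ.w_c, G.w_d]) (Γ.I.map_comp R.d μ.μ).symm rfl _,
      ← Γ.I.map_comp, ← Γ.I.map_comp, μ.natural]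

end MapDefs

end GaloisStructure

/-- Lemma 4.1: `I` preserves internal categories, internal functors
and internal natural transformations when source and target morphisms are trivial
coverings.
Let `Γ` be an admissible Galois structure on a finitely complete category `C`, let `R`
and `S` be internal categories in `C` whose source and target morphisms are trivial
coverings, let `f, g : R ⟶ S` be internal functors and `μ` an internal natural
transformation from `f` to `g`.  Then `I(R)` and `I(S)` carry internal category
structures in `X` with all structure morphisms the `I`-images of those of `R` and `S`,
`I(f)` and `I(g)` are internal functors `I(R) ⟶ I(S)`, and `I(μ)` is an internal
natural transformation from `I(f)` to `I(g)`; in particular, if `f` and `g` are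
naturally isomorphic then so are `I(f)` and `I(g)`. -/
theorem I_preserves_internal_structures
    {X : Type u₂} [Category.{v₂} X] [HasFiniteLimits C]
    (Γ : GaloisStructure C X) (hadm : Γ.Admissible)
    (R S : InternalCat C)
    (hRd : Γ.TrivialCovering R.d) (hRc : Γ.TrivialCovering R.c)
    (hSd : Γ.TrivialCovering S.d) (hSc : Γ.TrivialCovering S.c)
    (f g : InternalFunctor R S) (μ : InternalNatTrans f g) :
    ∃ (R' S' : InternalCat X) (f' g' : InternalFunctor R' S')
      (μ' : InternalNatTrans f' g'),
      R'.base = Γ.I.obj R.base ∧ R'.arr = Γ.I.obj R.arr ∧ R'.pairs = Γ.I.obj R.pairs ∧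
      HEq R'.d (Γ.I.map R.d) ∧ HEq R'.c (Γ.I.map R.c) ∧ HEq R'.e (Γ.I.map R.e) ∧
      HEq R'.p₁ (Γ.I.map R.p₁) ∧ HEq R'.p₂ (Γ.I.map R.p₂) ∧ HEq R'.m (Γ.I.map R.m) ∧
      S'.base = Γ.I.obj S.base ∧ S'.arr = Γ.I.obj S.arr ∧ S'.pairs = Γ.I.obj S.pairs ∧
      HEq S'.d (Γ.I.map S.d) ∧ HEq S'.c (Γ.I.map S.c) ∧ HEq S'.e (Γ.I.map S.e) ∧
      HEq S'.p₁ (Γ.I.map S.p₁) ∧ HEq S'.p₂ (Γ.I.map S.p₂) ∧ HEq S'.m (Γ.I.map S.m) ∧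
      HEq f'.f₀ (Γ.I.map f.f₀) ∧ HEq f'.f₁ (Γ.I.map f.f₁) ∧
      HEq g'.f₀ (Γ.I.map g.f₀) ∧ HEq g'.f₁ (Γ.I.map g.f₁) ∧
      HEq μ'.μ (Γ.I.map μ.μ) ∧
      (μ.IsNatIso → μ'.IsNatIso) := by
  refine ⟨Γ.mapCat hadm R hRd hRc, Γ.mapCat hadm S hSd hSc,
    Γ.mapFunctor hadm hRd hRc hSd hSc f, Γ.mapFunctor hadm hRd hRc hSd hSc g,
    Γ.mapNat hadm hRd hRc hSd hSc μ,
    rfl, rfl, rfl, HEq.rfl, HEq.rfl, HEq.rfl, HEq.rfl, HEq.rfl, HEq.rfl,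
    rfl, rfl, rfl, HEq.rfl, HEq.rfl, HEq.rfl, HEq.rfl, HEq.rfl, HEq.rfl,
    HEq.rfl, HEq.rfl, HEq.rfl, HEq.rfl, HEq.rfl, ?_⟩
  rintro ⟨ν, h1, h2⟩
  refine ⟨Γ.mapNat hadm hRd hRc hSd hSc ν, ?_, ?_⟩
  · simp only [GaloisStructure.mapNat_μ, GaloisStructure.mapCat_m, GaloisStructure.mapCat_e,
      GaloisStructure.mapFunctor_f₀]
    erw [Γ.lift_map S.isPullback (Γ.mapCat hadm S hSd hSc).isPullback
      (by rw [μ.w_c, ν.w_d]) rfl rfl _, ← Γ.I.map_comp, h1, Γ.I.map_comp]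
    rfl
  · simp only [GaloisStructure.mapNat_μ, GaloisStructure.mapCat_m, GaloisStructure.mapCat_e,
      GaloisStructure.mapFunctor_f₀]
    erw [Γ.lift_map S.isPullback (Γ.mapCat hadm S hSd hSc).isPullback
      (by rw [ν.w_c, μ.w_d]) rfl rfl _, ← Γ.I.map_comp, h2, Γ.I.map_comp]
    rfl

end GaloisPaper
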